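/- arXiv:2003.00633 — 3 statements merged into one kernel-verified Lean document; each statement's English description precedes it below -/
import Mathlib

section
/- Let k be an algebraically closed field of characteristic p > 5, let a ∈ k with a ∉ {0, 1, −1}, and let s ∈ k satisfy s² = a. Then the quotient ring R = k[X,Y]/(Y² − X(X²−1)(X²−a²)) is an integral domain, and its field of fractions K admits a k-algebra automorphism τ with τ(x) = a/x and τ(y) = s³·y/x³ (where x, y denote the images of X, Y), and τ satisfies τ ∘ τ = id and τ ≠ id, i.e. τ has order exactly 2. -/
open MvPolynomial

set_option synthInstance.maxHeartbeats 1000000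
set_option maxHeartbeats 1000000

/-- The ideal `(Y² − X(X²−1)(X²−a²))` in `k[X,Y]`, where `X = X 0`, `Y = X 1`. -/
noncomputable def curveIdeal1 (k : Type) [Field k] (a : k) :
    Ideal (MvPolynomial (Fin 2) k) :=
  Ideal.span {X 1 ^ 2 - X 0 * (X 0 ^ 2 - 1) * (X 0 ^ 2 - C a ^ 2)}

/-- The affine coordinate ring `R = k[X,Y]/(Y² − X(X²−1)(X²−a²))`. -/
abbrev CurveRing1 (k : Type) [Field k] (a : k) : Type :=
  MvPolynomial (Fin 2) k ⧸ curveIdeal1 k a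

noncomputable def curveEquiv (k : Type) [Field k] :
    MvPolynomial (Fin 2) k ≃+* Polynomial (Polynomial k) :=
  ((renameEquiv k (Equiv.swap (0:Fin 2) 1)).trans ((MvPolynomial.finSuccEquiv k 1).trans
    (Polynomial.mapAlgEquiv ((MvPolynomial.finSuccEquiv k 0).trans
      (Polynomial.mapAlgEquiv (isEmptyAlgEquiv k (Fin 0))))))).toRingEquiv

theorem curveEquiv_g (k : Type) [Field k] (a : k) :
    curveEquiv k (X 1 ^ 2 - X 0 * (X 0 ^ 2 - 1) * (X 0 ^ 2 - C a ^ 2)) =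
    Polynomial.X ^ 2 - Polynomial.C (Polynomial.X * (Polynomial.X ^ 2 - 1) *
      (Polynomial.X ^ 2 - Polynomial.C (a^2))) := by
  have h0 : MvPolynomial.finSuccEquiv k 1 (X (0 : Fin 2)) = Polynomial.X :=
    finSuccEquiv_X_zero
  have h1 : MvPolynomial.finSuccEquiv k 1 (X (1 : Fin 2)) = Polynomial.C (X 0) := by
    have : (1 : Fin 2) = (0 : Fin 1).succ := rfl
    rw [this, finSuccEquiv_X_succ]
  have h2 : MvPolynomial.finSuccEquiv k 0 (X (0 : Fin 1)) = Polynomial.X :=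
    finSuccEquiv_X_zero
  have hC : ∀ c : k, (AddMonoidAlgebra.uniqueAlgEquiv k (Fin 0 →₀ ℕ)) (C c) = c :=
    fun c => (isEmptyAlgEquiv k (Fin 0)).commutes c
  simp [curveEquiv, map_sub, map_pow, map_mul, map_one, h0, h1, h2, finSuccEquiv_apply, hC,
    isEmptyAlgEquiv, Equiv.swap_apply_left, Equiv.swap_apply_right]

theorem irred_part (k : Type) [Field k] (a : k) :
    Irreducible ((Polynomial.X : Polynomial (Polynomial k)) ^ 2 -
      Polynomial.C (Polynomial.X * (Polynomial.X ^ 2 - 1) *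
        (Polynomial.X ^ 2 - Polynomial.C (a^2)))) := by
  set f : Polynomial k := Polynomial.X * (Polynomial.X ^ 2 - 1) *
    (Polynomial.X ^ 2 - Polynomial.C (a^2)) with hf
  have hdeg : f.natDegree = 5 := by
    rw [hf]; compute_degree!
  have hmonic : ((Polynomial.X : Polynomial (Polynomial k)) ^ 2 - Polynomial.C f).Monic :=
    Polynomial.monic_X_pow_sub_C f two_ne_zero
  rw [hmonic.irreducible_iff_irreducible_map_fraction_map (K := FractionRing (Polynomial k))]
  rw [Polynomial.map_sub, Polynomial.map_pow, Polynomial.map_X, Polynomial.map_C]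
  refine X_pow_sub_C_irreducible_of_prime Nat.prime_two ?_
  intro b hb
  have hint : IsIntegral (Polynomial k) b := by
    refine ⟨Polynomial.X ^ 2 - Polynomial.C f, Polynomial.monic_X_pow_sub_C f two_ne_zero, ?_⟩
    simp [hb]
  obtain ⟨c, hc⟩ := IsIntegrallyClosed.isIntegral_iff.mp hint
  rw [← hc, ← map_pow] at hb
  have h2 : c ^ 2 = f := IsFractionRing.injective (Polynomial k) (FractionRing (Polynomial k)) hb
  have := congrArg Polynomial.natDegree h2
  rw [Polynomial.natDegree_pow, hdeg] at this
  omega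

theorem curvePoly_prime (k : Type) [Field k] (a : k) :
    Prime (X 1 ^ 2 - X 0 * (X 0 ^ 2 - 1) * (X 0 ^ 2 - C a ^ 2) : MvPolynomial (Fin 2) k) := by
  rw [← UniqueFactorizationMonoid.irreducible_iff_prime]
  rw [← MulEquiv.irreducible_iff (curveEquiv k), curveEquiv_g]
  exact irred_part k a

theorem curveIdeal1_isPrime (k : Type) [Field k] (a : k) : (curveIdeal1 k a).IsPrime := by
  rw [curveIdeal1, Ideal.span_singleton_prime (curvePoly_prime k a).ne_zero]
  exact curvePoly_prime k a

theorem curveRing1_isDomain (k : Type) [Field k] (a : k) : IsDomain (CurveRing1 k a) :=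
  haveI := curveIdeal1_isPrime k a
  Ideal.Quotient.isDomain (curveIdeal1 k a)

theorem not_mem_curveIdeal1 (k : Type) [Field k] (a : k) (P : MvPolynomial (Fin 2) k)
    (hd : (curveEquiv k P).natDegree < 2) (h0 : curveEquiv k P ≠ 0) :
    P ∉ curveIdeal1 k a := by
  rw [curveIdeal1, Ideal.mem_span_singleton]
  intro hdvd
  have hdvd' := map_dvd (curveEquiv k) hdvd
  rw [curveEquiv_g] at hdvd'
  have h2 : ((Polynomial.X : Polynomial (Polynomial k)) ^ 2 -
      Polynomial.C (Polynomial.X * (Polynomial.X ^ 2 - 1) *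
        (Polynomial.X ^ 2 - Polynomial.C (a^2)))).natDegree = 2 := by
    compute_degree!
  have := Polynomial.natDegree_le_of_dvd hdvd' h0
  omega


theorem auxMain {k : Type} [Field k] {R : Type} [CommRing R] [IsDomain R]
    (cst : k →+* R) (a s : k) (ha0 : a ≠ 0) (hs : s ^ 2 = a) (x y : R)
    (hx0 : x ≠ 0)
    (hrel : y ^ 2 = x * (x ^ 2 - 1) * (x ^ 2 - cst a ^ 2))
    (hpres : ∀ (S : Type) [CommRing S] (f : k →+* S) (xv yv : S),
      yv ^ 2 = xv * (xv ^ 2 - 1) * (xv ^ 2 - f a ^ 2) →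
      ∃ φ : R →+* S, (∀ c, φ (cst c) = f c) ∧ φ x = xv ∧ φ y = yv)
    (hext : ∀ (S : Type) [CommRing S] (f g : R →+* S),
      (∀ c, f (cst c) = g (cst c)) → f x = g x → f y = g y → f = g)
    (hxa : x ^ 2 ≠ cst a) :
    ∃ τ : FractionRing R ≃+* FractionRing R,
      (∀ c : k, τ (algebraMap R (FractionRing R) (cst c)) = algebraMap R (FractionRing R) (cst c)) ∧
      τ (algebraMap R (FractionRing R) x) =
        algebraMap R (FractionRing R) (cst a) / algebraMap R (FractionRing R) x ∧
      τ (algebraMap R (FractionRing R) y) =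
        algebraMap R (FractionRing R) (cst s) ^ 3 * algebraMap R (FractionRing R) y /
          algebraMap R (FractionRing R) x ^ 3 ∧
      τ.trans τ = RingEquiv.refl _ ∧ τ ≠ RingEquiv.refl _ := by
  have hs0 : s ≠ 0 := by rintro rfl; rw [← hs] at ha0; simp at ha0
  set A := Localization.Away x with hA
  set iA : R →+* A := algebraMap R A with hiA
  set u : A := IsLocalization.Away.invSelf x with hu
  have hx : iA x * u = 1 := IsLocalization.Away.mul_invSelf x
  set xA : A := iA x with hxAdef
  set yA : A := iA y with hyAdef
  set aA : A := iA (cst a) with haAdef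
  set sA : A := iA (cst s) with hsAdef
  set bA : A := iA (cst a⁻¹) with hbAdef
  have hab : aA * bA = 1 := by
    rw [haAdef, hbAdef, ← map_mul, ← map_mul, mul_inv_cancel₀ ha0, map_one, map_one]
  have hs2 : sA ^ 2 = aA := by
    rw [hsAdef, haAdef, ← map_pow, ← map_pow, hs]
  have hyA : yA ^ 2 = xA * (xA ^ 2 - 1) * (xA ^ 2 - aA ^ 2) := by
    rw [hyAdef, hxAdef, haAdef, ← map_pow, hrel]
    simp only [map_mul, map_sub, map_pow, map_one]
  -- the substitution homomorphism φ : R →+* A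
  have hyvrel : (sA ^ 3 * yA * u ^ 3) ^ 2 =
      (aA * u) * ((aA * u) ^ 2 - 1) * ((aA * u) ^ 2 - ((iA.comp cst) a) ^ 2) := by
    show _ = (aA * u) * ((aA * u) ^ 2 - 1) * ((aA * u) ^ 2 - aA ^ 2)
    have key : ((sA ^ 3 * yA * u ^ 3) ^ 2 -
        (aA * u) * ((aA * u) ^ 2 - 1) * ((aA * u) ^ 2 - aA ^ 2)) * xA ^ 6 = 0 := by
      have e1 : ((sA ^ 3 * yA * u ^ 3) ^ 2 -
          (aA * u) * ((aA * u) ^ 2 - 1) * ((aA * u) ^ 2 - aA ^ 2)) * xA ^ 6 =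
          sA ^ 6 * yA ^ 2 * (xA * u) ^ 6 -
          aA * xA * (xA * u) * (aA ^ 2 * (xA * u) ^ 2 - xA ^ 2) *
            (aA ^ 2 * (xA * u) ^ 2 - aA ^ 2 * xA ^ 2) := by ring
      rw [hx] at e1
      rw [e1, hyA]
      linear_combination ((sA ^ 4 + sA ^ 2 * aA + aA ^ 2) *
        (xA * (xA ^ 2 - 1) * (xA ^ 2 - aA ^ 2))) * hs2
    have hxu6 : xA ^ 6 * u ^ 6 = 1 := by rw [← mul_pow, hx, one_pow]
    linear_combination u ^ 6 * key - ((sA ^ 3 * yA * u ^ 3) ^ 2 -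
      (aA * u) * ((aA * u) ^ 2 - 1) * ((aA * u) ^ 2 - aA ^ 2)) * hxu6
  obtain ⟨φ, hφc, hφx, hφy⟩ := hpres A (iA.comp cst) (aA * u) (sA ^ 3 * yA * u ^ 3) hyvrel
  simp only [RingHom.comp_apply] at hφc
  -- the endomorphism σ of A extending φ
  have huunit : IsUnit u := IsUnit.of_mul_eq_one xA (by rw [mul_comm]; exact hx)
  have haunit : IsUnit aA := IsUnit.of_mul_eq_one bA hab
  have hunit : IsUnit (φ x) := by rw [hφx]; exact haunit.mul huunit
  set σ : A →+* A := IsLocalization.Away.lift x hunit with hσdef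
  have hσ : ∀ r, σ (iA r) = φ r := fun r => IsLocalization.Away.lift_eq x hunit r
  have hσu : σ u = xA * bA := by
    have h1 : σ xA * σ u = 1 := by rw [← map_mul, hx, map_one]
    have h2 : σ xA = aA * u := by rw [hxAdef, hσ, hφx]
    have hunit' : IsUnit (σ xA) := by rw [h2]; exact haunit.mul huunit
    have h3 : σ xA * (xA * bA) = 1 := by
      rw [h2]; linear_combination (aA * bA) * hx + hab
    exact hunit'.mul_left_cancel (h1.trans h3.symm)
  have hσa : σ aA = aA := by rw [haAdef, hσ, hφc]
  have hσs : σ sA = sA := by rw [hsAdef, hσ, hφc]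
  have hσσ : σ.comp σ = RingHom.id A := by
    refine IsLocalization.ringHom_ext (Submonoid.powers x) ?_
    refine hext A _ _ (fun c => ?_) ?_ ?_
    · show σ (σ (iA (cst c))) = iA (cst c)
      rw [hσ, hφc, hσ, hφc]
    · show σ (σ (iA x)) = iA x
      rw [hσ, hφx, map_mul, hσa, hσu]
      linear_combination xA * hab
    · show σ (σ (iA y)) = iA y
      rw [hσ, hφy, map_mul, map_mul, map_pow, map_pow, hσs, hσu, hσ, hφy]
      linear_combination ((sA ^ 4 + sA ^ 2 * aA + aA ^ 2) * yA * u ^ 3 * xA ^ 3 * bA ^ 3) * hs2 +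
        ((aA ^ 2 * bA ^ 2 + aA * bA + 1) * yA * u ^ 3 * xA ^ 3) * hab +
        ((xA ^ 2 * u ^ 2 + xA * u + 1) * yA) * hx
  -- injectivity
  have hMle : Submonoid.powers x ≤ nonZeroDivisors R :=
    powers_le_nonZeroDivisors_of_noZeroDivisors hx0
  have hiAinj : Function.Injective iA := IsLocalization.injective A hMle
  have hσinj : Function.Injective σ :=
    Function.LeftInverse.injective (g := σ) (fun z => RingHom.congr_fun hσσ z)
  have hφinj : Function.Injective φ := by
    intro r1 r2 h
    apply hiAinj; apply hσinj
    rw [hσ, hσ, h]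
  -- the map j : A →+* FractionRing R
  set F := FractionRing R with hF
  set iF : R →+* F := algebraMap R F with hiF
  have hiFinj : Function.Injective iF := IsFractionRing.injective R F
  have hxF : iF x ≠ 0 := fun h => hx0 (hiFinj (by rw [h, map_zero]))
  have hxFunit : IsUnit (iF x) := isUnit_iff_ne_zero.mpr hxF
  set j : A →+* F := IsLocalization.Away.lift x hxFunit with hjdef
  have hj : ∀ r, j (iA r) = iF r := fun r => IsLocalization.Away.lift_eq x hxFunit r
  have hjinj : Function.Injective j := by
    intro z1 z2 h
    rw [← sub_eq_zero] at h ⊢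
    rw [← map_sub] at h
    obtain ⟨⟨r, m⟩, hz⟩ := IsLocalization.surj (Submonoid.powers x) (z1 - z2)
    have h2 : iF r = 0 := by
      rw [← hj, ← hz, map_mul, h, zero_mul]
    have hr : r = 0 := hiFinj (by rw [h2, map_zero])
    rw [hr, map_zero] at hz
    have hmunit : IsUnit (iA (m : R)) := IsLocalization.map_units A m
    exact (IsUnit.mul_left_eq_zero hmunit).mp hz
  have hψinj : Function.Injective (j.comp φ) := hjinj.comp hφinj
  -- the endomorphism of the fraction field
  set τ0 : F →+* F := IsFractionRing.lift hψinj with hτ0def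
  have hτ0 : ∀ r, τ0 (iF r) = j (φ r) := fun r => IsFractionRing.lift_algebraMap hψinj r
  have hju : j u = (iF x)⁻¹ := by
    have h1 : iF x * j u = 1 := by rw [← hj x, ← map_mul, hx, map_one]
    exact (inv_eq_of_mul_eq_one_right h1).symm
  have hτcst : ∀ c, τ0 (iF (cst c)) = iF (cst c) := fun c => by
    rw [hτ0, hφc, hj]
  have hτx : τ0 (iF x) = iF (cst a) / iF x := by
    rw [hτ0, hφx, map_mul, hju, haAdef, hj, div_eq_mul_inv]
  have hτy : τ0 (iF y) = iF (cst s) ^ 3 * iF y / iF x ^ 3 := by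
    rw [hτ0, hφy, map_mul, map_mul, map_pow, map_pow, hju, hsAdef, hyAdef, hj, hj,
      div_eq_mul_inv, inv_pow]
  have haF : iF (cst a) ≠ 0 := fun h => ha0 (cst.injective (hiFinj (by rw [h, map_zero, map_zero])))
  have hsF : iF (cst s) ≠ 0 := fun h => hs0 (cst.injective (hiFinj (by rw [h, map_zero, map_zero])))
  have hs2F : iF (cst s) ^ 2 = iF (cst a) := by rw [← map_pow, ← map_pow, hs]
  have hτ0τ0 : τ0.comp τ0 = RingHom.id F := by
    refine IsLocalization.ringHom_ext (nonZeroDivisors R) ?_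
    refine hext F _ _ (fun c => ?_) ?_ ?_
    · show τ0 (τ0 (iF (cst c))) = iF (cst c)
      rw [hτcst, hτcst]
    · show τ0 (τ0 (iF x)) = iF x
      rw [hτx, map_div₀, hτcst, hτx]
      rw [div_div_eq_mul_div, mul_div_cancel_left₀ _ haF]
    · show τ0 (τ0 (iF y)) = iF y
      rw [hτy, map_div₀, map_mul, map_pow, map_pow, hτcst, hτy, hτx]
      rw [← hs2F]
      have key : ∀ (S X Y : FractionRing R), S ≠ 0 → X ≠ 0 → S^3*(S^3*Y/X^3)/((S^2)/X)^3 = Y := by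
        intro S X Y hS hX; field_simp
      exact key _ _ _ hsF hxF
  refine ⟨RingEquiv.ofRingHom τ0 τ0 hτ0τ0 hτ0τ0, hτcst, hτx, hτy, ?_, ?_⟩
  · ext z
    exact RingHom.congr_fun hτ0τ0 z
  · intro h
    have hfix : τ0 (iF x) = iF x := by
      have := congrArg (fun e : F ≃+* F => e (iF x)) h
      exact this
    rw [hτx] at hfix
    rw [div_eq_iff hxF] at hfix
    apply hxa
    apply hiFinj
    rw [map_pow, pow_two, ← hfix]


theorem curveEquiv_X0 (k : Type) [Field k] :
    curveEquiv k (X 0) = Polynomial.C Polynomial.X := by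
  have h0 : MvPolynomial.finSuccEquiv k 1 (X (1 : Fin 2)) = Polynomial.C (X 0) := by
    have : (1 : Fin 2) = (0 : Fin 1).succ := rfl
    rw [this, finSuccEquiv_X_succ]
  have h2 : MvPolynomial.finSuccEquiv k 0 (X (0 : Fin 1)) = Polynomial.X :=
    finSuccEquiv_X_zero
  simp [curveEquiv, h0, h2, Equiv.swap_apply_left]

theorem curveEquiv_Cc (k : Type) [Field k] (c : k) :
    curveEquiv k (C c) = Polynomial.C (Polynomial.C c) := by
  have hC : ∀ c : k, (AddMonoidAlgebra.uniqueAlgEquiv k (Fin 0 →₀ ℕ)) (C c) = c :=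
    fun c => (isEmptyAlgEquiv k (Fin 0)).commutes c
  simp [curveEquiv, finSuccEquiv_apply, isEmptyAlgEquiv, hC]

/-- The image of a polynomial `f ∈ k[X,Y]` in the fraction field of the coordinate ring. -/
noncomputable def emb1 (k : Type) [Field k] (a : k) (f : MvPolynomial (Fin 2) k) :
    FractionRing (CurveRing1 k a) :=
  algebraMap (CurveRing1 k a) (FractionRing (CurveRing1 k a))
    (Ideal.Quotient.mk (curveIdeal1 k a) f)

theorem stmt1 (k : Type) [Field k] [IsAlgClosed k] (p : ℕ) [CharP k p] (hp : 5 < p)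
    (a s : k) (ha0 : a ≠ 0) (ha1 : a ≠ 1) (han1 : a ≠ -1) (hs : s ^ 2 = a) :
    ∃ _ : IsDomain (CurveRing1 k a),
      ∃ τ : FractionRing (CurveRing1 k a) ≃+* FractionRing (CurveRing1 k a),
        (∀ c : k, τ (emb1 k a (C c)) = emb1 k a (C c)) ∧
        τ (emb1 k a (X 0)) = emb1 k a (C a) / emb1 k a (X 0) ∧
        τ (emb1 k a (X 1)) =
          emb1 k a (C s) ^ 3 * emb1 k a (X 1) / emb1 k a (X 0) ^ 3 ∧
        τ.trans τ = RingEquiv.refl _ ∧ τ ≠ RingEquiv.refl _ := by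
  haveI hdom : IsDomain (CurveRing1 k a) := curveRing1_isDomain k a
  refine ⟨hdom, ?_⟩
  set I := curveIdeal1 k a with hIdef
  set mk0 : MvPolynomial (Fin 2) k →+* CurveRing1 k a := (Ideal.Quotient.mk I : _) with hmk0
  have hgmem : (X 1 ^ 2 - X 0 * (X 0 ^ 2 - 1) * (X 0 ^ 2 - C a ^ 2) : MvPolynomial (Fin 2) k)
      ∈ I := Ideal.subset_span rfl
  -- x ≠ 0
  have hx0 : mk0 (X 0) ≠ 0 := by
    intro h
    have hmem := Ideal.Quotient.eq_zero_iff_mem.mp h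
    exact not_mem_curveIdeal1 k a _
      (by rw [curveEquiv_X0]; simp)
      (by rw [curveEquiv_X0]; exact Polynomial.C_ne_zero.mpr Polynomial.X_ne_zero) hmem
  -- the defining relation
  have hrel : mk0 (X 1) ^ 2 = mk0 (X 0) * (mk0 (X 0) ^ 2 - 1) *
      (mk0 (X 0) ^ 2 - (mk0.comp MvPolynomial.C) a ^ 2) := by
    have h : mk0 (X 1 ^ 2 - X 0 * (X 0 ^ 2 - 1) * (X 0 ^ 2 - C a ^ 2)) = 0 :=
      Ideal.Quotient.eq_zero_iff_mem.mpr hgmem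
    simp only [map_sub, map_mul, map_pow, map_one] at h
    rw [RingHom.comp_apply]
    linear_combination h
  -- presentation : homomorphisms out of the coordinate ring
  have hpres : ∀ (S : Type) [CommRing S] (f : k →+* S) (xv yv : S),
      yv ^ 2 = xv * (xv ^ 2 - 1) * (xv ^ 2 - f a ^ 2) →
      ∃ φ : CurveRing1 k a →+* S, (∀ c, φ ((mk0.comp MvPolynomial.C) c) = f c) ∧
        φ (mk0 (X 0)) = xv ∧ φ (mk0 (X 1)) = yv := by
    intro S _ f xv yv hv
    have hΦg : eval₂Hom f ![xv, yv]
        (X 1 ^ 2 - X 0 * (X 0 ^ 2 - 1) * (X 0 ^ 2 - C a ^ 2)) = 0 := by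
      simp only [map_sub, map_mul, map_pow, map_one, eval₂Hom_X', eval₂Hom_C,
        Matrix.cons_val_zero, Matrix.cons_val_one, Matrix.head_cons]
      linear_combination hv
    have hvanish : ∀ q ∈ I, eval₂Hom f ![xv, yv] q = 0 := by
      intro q hq
      rw [hIdef, curveIdeal1, Ideal.mem_span_singleton] at hq
      obtain ⟨q', rfl⟩ := hq
      rw [map_mul, hΦg, zero_mul]
    refine ⟨Ideal.Quotient.lift I (eval₂Hom f ![xv, yv]) hvanish, fun c => ?_, ?_, ?_⟩
    · show Ideal.Quotient.lift I _ hvanish (mk0 (C c)) = f c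
      rw [hmk0, Ideal.Quotient.lift_mk, eval₂Hom_C]
    · rw [hmk0, Ideal.Quotient.lift_mk, eval₂Hom_X']
      simp
    · rw [hmk0, Ideal.Quotient.lift_mk, eval₂Hom_X']
      simp
  -- uniqueness of homomorphisms out of the coordinate ring
  have hext : ∀ (S : Type) [CommRing S] (f g : CurveRing1 k a →+* S),
      (∀ c, f ((mk0.comp MvPolynomial.C) c) = g ((mk0.comp MvPolynomial.C) c)) →
      f (mk0 (X 0)) = g (mk0 (X 0)) → f (mk0 (X 1)) = g (mk0 (X 1)) → f = g := by
    intro S _ f g hc hfx hfy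
    refine Ideal.Quotient.ringHom_ext ?_
    refine MvPolynomial.ringHom_ext (fun r => hc r) (fun i => ?_)
    fin_cases i
    · exact hfx
    · exact hfy
  -- x^2 ≠ a
  have hxa : mk0 (X 0) ^ 2 ≠ (mk0.comp MvPolynomial.C) a := by
    intro h
    have h2 : mk0 (X 0 ^ 2 - C a) = 0 := by
      rw [map_sub, map_pow, h]
      simp [RingHom.comp_apply]
    have hmem := Ideal.Quotient.eq_zero_iff_mem.mp h2
    refine not_mem_curveIdeal1 k a _ ?_ ?_ hmem
    · rw [map_sub, map_pow, curveEquiv_X0, curveEquiv_Cc, ← map_pow, ← map_sub]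
      simp
    · rw [map_sub, map_pow, curveEquiv_X0, curveEquiv_Cc, ← map_pow, ← map_sub]
      rw [Polynomial.C_ne_zero]
      exact Polynomial.X_pow_sub_C_ne_zero (by norm_num) a
  obtain ⟨τ, h1, h2, h3, h4, h5⟩ :=
    auxMain (mk0.comp MvPolynomial.C) a s ha0 hs (mk0 (X 0)) (mk0 (X 1))
      hx0 hrel hpres hext hxa
  refine ⟨τ, fun c => h1 c, h2, h3, h4, h5⟩
end

section
/- Let p > 5 be a prime. Set ε₁ = 1 − (−1/p) and ε₃ = 1 − (−3/p) (Legendre symbols), and define rational numbers h₂ = ε₁/2, h₃ = ε₃/2, and h₁ = (p−1)/12 + ε₃/3 + ε₁/4 − h₂ − h₃. Then 9·h₁(h₁−1)/2 + 7h₁ + 6h₂h₁ + 3h₃h₁ + 4h₂ + 2h₃ + 2h₂h₃ = (p−1)(3p+17)/96 + (p+6)·ε₁/16 + ε₃/3. -/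
theorem stmt11 (p : ℕ) [Fact p.Prime] (hp : 5 < p)
    (ε₁ ε₃ h₁ h₂ h₃ : ℚ)
    (hε₁ : ε₁ = 1 - legendreSym p (-1))
    (hε₃ : ε₃ = 1 - legendreSym p (-3))
    (hh₂ : h₂ = ε₁ / 2)
    (hh₃ : h₃ = ε₃ / 2)
    (hh₁ : h₁ = ((p : ℚ) - 1) / 12 + ε₃ / 3 + ε₁ / 4 - h₂ - h₃) :
    9 * (h₁ * (h₁ - 1) / 2) + 7 * h₁ + 6 * h₂ * h₁ + 3 * h₃ * h₁
        + 4 * h₂ + 2 * h₃ + 2 * h₂ * h₃ =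
      ((p : ℚ) - 1) * (3 * (p : ℚ) + 17) / 96 + ((p : ℚ) + 6) * ε₁ / 16 + ε₃ / 3 := by
  have hp' := (Fact.out : p.Prime)
  have h1 : ((-1 : ℤ) : ZMod p) ≠ 0 := by
    simp only [Int.cast_neg, Int.cast_one, ne_eq, neg_eq_zero]
    exact one_ne_zero
  have h3 : ((-3 : ℤ) : ZMod p) ≠ 0 := by
    intro h
    have : (p : ℤ) ∣ -3 := (ZMod.intCast_zmod_eq_zero_iff_dvd _ _).mp h
    have : (p : ℤ) ∣ 3 := (dvd_neg).mp this
    have := Int.le_of_dvd (by norm_num) this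
    omega
  have hsq1 : (legendreSym p (-1)) ^ 2 = 1 := legendreSym.sq_one p h1
  have hsq3 : (legendreSym p (-3)) ^ 2 = 1 := legendreSym.sq_one p h3
  have hsq1' : ((legendreSym p (-1) : ℚ)) ^ 2 = 1 := by exact_mod_cast congrArg (Int.cast : ℤ → ℚ) hsq1
  have hsq3' : ((legendreSym p (-3) : ℚ)) ^ 2 = 1 := by exact_mod_cast congrArg (Int.cast : ℤ → ℚ) hsq3
  subst hh₁ hh₂ hh₃ hε₁ hε₃
  linear_combination (-15/32 : ℚ) * hsq1' + (-1/8 : ℚ) * hsq3'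
end

section
/- Let M be the set of fixed-point-free involutions in the symmetric group on the set {1, 2, 3, 4, 5, 6} (M has exactly 15 elements), and let the subgroup H of S₆ generated by the permutation (1 2)(3 4)(5 6) act on M by conjugation. Then this action has exactly 11 orbits: exactly 7 orbits of size 1 and exactly 4 orbits of size 2. -/
/-- The set of fixed-point-free involutions of `{1,…,6}` (realized on `Fin 6`). -/
def FPFInv : Set (Equiv.Perm (Fin 6)) := {σ | σ * σ = 1 ∧ ∀ i, σ i ≠ i}

/-- The subgroup of `S₆` generated by `(1 2)(3 4)(5 6)` (zero-indexed on `Fin 6`). -/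
def H12 : Subgroup (Equiv.Perm (Fin 6)) :=
  Subgroup.closure {Equiv.swap 0 1 * Equiv.swap 2 3 * Equiv.swap 4 5}

/-- The orbits of the conjugation action of `H12` on `FPFInv`. -/
def Orbits12 : Set (Set (Equiv.Perm (Fin 6))) :=
  (fun σ => {τ | ∃ g ∈ H12, g * σ * g⁻¹ = τ}) '' FPFInv

namespace Aux12

abbrev P6 := Equiv.Perm (Fin 6)

def g : P6 := Equiv.swap 0 1 * Equiv.swap 2 3 * Equiv.swap 4 5

lemma hg : g * g = 1 := by decide

lemma ginv : g⁻¹ = g := inv_eq_of_mul_eq_one_right hg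

lemma g_mem : g ∈ H12 := Subgroup.subset_closure (by simp [H12, g])

lemma mem_H12 (h : P6) : h ∈ H12 ↔ h = 1 ∨ h = g := by
  constructor
  · intro hh
    refine Subgroup.closure_induction (p := fun x _ => x = 1 ∨ x = g) ?_ (Or.inl rfl) ?_ ?_ hh
    · intro x hx; right; simpa [g] using hx
    · rintro x y _ _ (rfl | rfl) (rfl | rfl) <;> simp [hg]
    · rintro x _ (rfl | rfl) <;> simp [ginv]
  · rintro (rfl | rfl)
    · exact one_mem _
    · exact g_mem

def f (σ : P6) : Finset P6 := {σ, g * σ * g⁻¹}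

lemma orbit_eq (σ : P6) :
    {τ | ∃ h ∈ H12, h * σ * h⁻¹ = τ} = (↑(f σ) : Set P6) := by
  ext τ
  simp only [Set.mem_setOf_eq, f, Finset.coe_insert, Finset.coe_singleton,
    Set.mem_insert_iff, Set.mem_singleton_iff]
  constructor
  · rintro ⟨h, hh, rfl⟩
    rcases (mem_H12 h).1 hh with rfl | rfl
    · left; simp
    · right; rfl
  · rintro (rfl | rfl)
    · exact ⟨1, one_mem _, by simp⟩
    · exact ⟨g, g_mem, rfl⟩

def F : Finset P6 := Finset.univ.filter (fun σ => σ * σ = 1 ∧ ∀ i, σ i ≠ i)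

lemma FPFInv_eq : FPFInv = (↑F : Set P6) := by
  ext σ; simp [FPFInv, F]

lemma orbits_eq :
    Orbits12 = ((↑·) : Finset P6 → Set P6) '' ↑(F.image f) := by
  rw [Orbits12, FPFInv_eq]
  rw [show (fun σ => {τ | ∃ h ∈ H12, h * σ * h⁻¹ = τ}) = fun σ => (↑(f σ) : Set P6) from
    funext orbit_eq]
  rw [Finset.coe_image, ← Set.image_comp]
  rfl

lemma hF : F.card = 15 := by decide
lemma himg : (F.image f).card = 11 := by decide
lemma h1 : ((F.image f).filter (fun t => t.card = 1)).card = 7 := by decide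
lemma h2 : ((F.image f).filter (fun t => t.card = 2)).card = 4 := by decide

lemma filt_eq (n : ℕ) :
    {S ∈ Orbits12 | S.ncard = n} =
      ((↑·) : Finset P6 → Set P6) '' ↑((F.image f).filter (fun t => t.card = n)) := by
  rw [orbits_eq]
  ext S
  simp only [Set.mem_setOf_eq, Set.mem_image, Finset.mem_coe, Finset.mem_filter]
  constructor
  · rintro ⟨⟨t, ht, rfl⟩, hc⟩
    exact ⟨t, ⟨ht, by simpa [Set.ncard_coe_finset] using hc⟩, rfl⟩
  · rintro ⟨t, ⟨ht, hc⟩, rfl⟩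
    exact ⟨⟨t, ht, rfl⟩, by simpa [Set.ncard_coe_finset] using hc⟩

lemma ncard_coe_image (t : Finset (Finset P6)) :
    (((↑·) : Finset P6 → Set P6) '' ↑t).ncard = t.card := by
  rw [Set.ncard_image_of_injective _ Finset.coe_injective, Set.ncard_coe_finset]

end Aux12

theorem stmt12 :
    FPFInv.ncard = 15 ∧
    Orbits12.ncard = 11 ∧
    {S ∈ Orbits12 | S.ncard = 1}.ncard = 7 ∧
    {S ∈ Orbits12 | S.ncard = 2}.ncard = 4 := by
  refine ⟨?_, ?_, ?_, ?_⟩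
  · rw [Aux12.FPFInv_eq, Set.ncard_coe_finset, Aux12.hF]
  · rw [Aux12.orbits_eq, Aux12.ncard_coe_image, Aux12.himg]
  · rw [Aux12.filt_eq, Aux12.ncard_coe_image, Aux12.h1]
  · rw [Aux12.filt_eq, Aux12.ncard_coe_image, Aux12.h2]
end
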